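/- arXiv:2303.09009 — 8 statements merged into one kernel-verified Lean document; each statement's English description precedes it below -/
import Mathlib

section
/- Let μ > 0, let N be a real n×n skew-symmetric matrix, and let B be a real n×n matrix with N = B^sym − 2B, where B^sym = B + Bᵀ and L_{B^sym} = ‖B^sym‖ is the spectral norm of B^sym. Let x* solve (μI + N)x* = b. Suppose 0 < α < 1/L_{B^sym} and the sequence (x_k) satisfies the accelerated overrelaxation iteration (x_{k+1} − x_k)/α = −(μ x_{k+1} + B^sym x_k − 2B x_{k+1} − b). Then the Lyapunov function E^{αB}(x) = (1/2)‖x − x*‖²_{I − αB^sym} satisfies E^{αB}(x_{k+1}) ≤ (1 + αμ)^{−1} E^{αB}(x_k) for every k. Moreover, for the choice α = 1/(2L_{B^sym}), one has ‖x_k − x*‖² ≤ (1 + μ/(2L_{B^sym}))^{−k} · 3‖x_0 − x*‖² for all k. -/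
open Matrix

/-- The spectral norm (ℓ²-operator norm) of a real square matrix. -/
noncomputable def specNorm {n : ℕ} (M : Matrix (Fin n) (Fin n) ℝ) : ℝ :=
  ‖Matrix.toEuclideanCLM (𝕜 := ℝ) M‖

open scoped RealInnerProductSpace

lemma quad_abs_bound {n : ℕ} (M : Matrix (Fin n) (Fin n) ℝ) (v : Fin n → ℝ) :
    |v ⬝ᵥ M.mulVec v| ≤ specNorm M * (v ⬝ᵥ v) := by
  have h1 : v ⬝ᵥ M.mulVec v
      = ⟪(WithLp.equiv 2 _).symm v,
          (Matrix.toEuclideanCLM (𝕜 := ℝ) M) ((WithLp.equiv 2 _).symm v)⟫ := by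
    rw [WithLp.equiv_symm_apply, Matrix.toEuclideanCLM_toLp]
    simp [PiLp.inner_apply, dotProduct, WithLp.equiv_symm_apply, mul_comm]
  have h2 : v ⬝ᵥ v = ‖(WithLp.equiv 2 ((_ : Fin n) → ℝ)).symm v‖ ^ 2 := by
    rw [← real_inner_self_eq_norm_sq]
    simp only [WithLp.equiv_symm_apply, EuclideanSpace.inner_toLp_toLp, star_trivial]
  rw [h1, h2]
  calc |⟪(WithLp.equiv 2 _).symm v,
          (Matrix.toEuclideanCLM (𝕜 := ℝ) M) ((WithLp.equiv 2 _).symm v)⟫|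
      ≤ ‖(WithLp.equiv 2 ((_ : Fin n) → ℝ)).symm v‖
          * ‖(Matrix.toEuclideanCLM (𝕜 := ℝ) M) ((WithLp.equiv 2 _).symm v)‖ :=
        abs_real_inner_le_norm _ _
    _ ≤ ‖(WithLp.equiv 2 ((_ : Fin n) → ℝ)).symm v‖
          * (specNorm M * ‖(WithLp.equiv 2 ((_ : Fin n) → ℝ)).symm v‖) := by
        exact mul_le_mul_of_nonneg_left
          ((Matrix.toEuclideanCLM (𝕜 := ℝ) M).le_opNorm _) (norm_nonneg _)
    _ = specNorm M * ‖(WithLp.equiv 2 ((_ : Fin n) → ℝ)).symm v‖ ^ 2 := by ring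

lemma dot_transpose_mulVec {n : ℕ} (M : Matrix (Fin n) (Fin n) ℝ) (v w : Fin n → ℝ) :
    v ⬝ᵥ Mᵀ.mulVec w = w ⬝ᵥ M.mulVec v := by
  rw [Matrix.mulVec_transpose, dotProduct_comm, Matrix.dotProduct_mulVec]


/-- **Linear convergence of the accelerated overrelaxation (AOR) method for the
shifted skew-symmetric system `(μI + N)x = b`.**  Here `N = Bˢʸᵐ - 2B` with
`Bˢʸᵐ = B + Bᵀ`, `L = ‖Bˢʸᵐ‖` the spectral norm, and the Lyapunov function is
`E(x) = ½‖x - x*‖²_{I - αBˢʸᵐ}`.  For `0 < α < 1/L` one has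
`E(x_{k+1}) ≤ (1+αμ)⁻¹ E(x_k)`; moreover if `α = 1/(2L)` then
`‖x_k - x*‖² ≤ (1 + μ/(2L))⁻ᵏ · 3‖x_0 - x*‖²`. -/
theorem aor_shifted_skew_symmetric_convergence
    {n : ℕ} (μ α : ℝ) (hμ : 0 < μ)
    (N B : Matrix (Fin n) (Fin n) ℝ)
    (hskew : Nᵀ = -N)
    (hNB : N = (B + Bᵀ) - (2 : ℝ) • B)
    (b xs : Fin n → ℝ)
    (hxs : μ • xs + N.mulVec xs = b)
    (hα0 : 0 < α) (hα1 : α < 1 / specNorm (B + Bᵀ))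
    (x : ℕ → (Fin n → ℝ))
    (hiter : ∀ k, x (k + 1) - x k =
      -(α • (μ • x (k + 1) + (B + Bᵀ).mulVec (x k)
          - (2 : ℝ) • B.mulVec (x (k + 1)) - b))) :
    (∀ k, (1 / 2) * ((x (k + 1) - xs) ⬝ᵥ
            ((1 - α • (B + Bᵀ)).mulVec (x (k + 1) - xs)))
          ≤ (1 + α * μ)⁻¹ * ((1 / 2) * ((x k - xs) ⬝ᵥ
            ((1 - α • (B + Bᵀ)).mulVec (x k - xs))))) ∧
    (α = 1 / (2 * specNorm (B + Bᵀ)) → ∀ k,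
      (x k - xs) ⬝ᵥ (x k - xs)
        ≤ ((1 + μ / (2 * specNorm (B + Bᵀ)))⁻¹) ^ k
            * (3 * ((x 0 - xs) ⬝ᵥ (x 0 - xs)))) := by
  set S : Matrix (Fin n) (Fin n) ℝ := B + Bᵀ with hS
  set L : ℝ := specNorm S with hL
  -- basic facts about L
  have hL0 : 0 ≤ L := norm_nonneg _
  have hLpos : 0 < L := by
    rcases hL0.lt_or_eq with h | h
    · exact h
    · exfalso
      rw [← h] at hα1
      simp only [div_zero] at hα1
      linarith
  have hαL : α * L < 1 := (lt_div_iff₀ hLpos).mp hα1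
  have hdotself : ∀ v : Fin n → ℝ, 0 ≤ v ⬝ᵥ v := fun v =>
    Finset.sum_nonneg fun i _ => mul_self_nonneg _
  have hquad : ∀ v : Fin n → ℝ, |v ⬝ᵥ S.mulVec v| ≤ L * (v ⬝ᵥ v) :=
    fun v => quad_abs_bound S v
  have hSsymm : Sᵀ = S := by
    rw [hS, Matrix.transpose_add, Matrix.transpose_transpose, add_comm]
  have hsymm : ∀ v w : Fin n → ℝ, v ⬝ᵥ S.mulVec w = w ⬝ᵥ S.mulVec v := by
    intro v w
    conv_lhs => rw [← hSsymm]
    exact dot_transpose_mulVec S v w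
  have h2B : ∀ v : Fin n → ℝ, 2 * (v ⬝ᵥ B.mulVec v) = v ⬝ᵥ S.mulVec v := by
    intro v
    rw [hS]
    simp only [Matrix.add_mulVec, dotProduct_add]
    rw [dot_transpose_mulVec B v v]
    ring
  -- expansion of the Lyapunov quadratic form
  have mexp : ∀ v : Fin n → ℝ,
      v ⬝ᵥ ((1 - α • S).mulVec v) = v ⬝ᵥ v - α * (v ⬝ᵥ S.mulVec v) := by
    intro v
    simp [Matrix.sub_mulVec, Matrix.one_mulVec, Matrix.smul_mulVec,
      dotProduct_sub, dotProduct_smul, smul_eq_mul]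
  -- error-form iteration
  have key1 : ∀ k, (x (k+1) - xs) - (x k - xs) =
      -(α • (μ • (x (k+1) - xs) + S.mulVec (x k - xs)
        - (2:ℝ) • B.mulVec (x (k+1) - xs))) := by
    intro k
    have h := hiter k
    rw [← hxs, hNB] at h
    have hLHS : (x (k+1) - xs) - (x k - xs) = x (k+1) - x k := by abel
    rw [hLHS, h]
    simp only [Matrix.sub_mulVec, Matrix.smul_mulVec, Matrix.mulVec_sub]
    module
  -- the scalar identity obtained by pairing with the new error
  have hscalar : ∀ k,
      (x (k+1) - xs) ⬝ᵥ (x (k+1) - xs) - (x (k+1) - xs) ⬝ᵥ (x k - xs)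
        = -(α * (μ * ((x (k+1) - xs) ⬝ᵥ (x (k+1) - xs))
            + (x (k+1) - xs) ⬝ᵥ S.mulVec (x k - xs)
            - ((x (k+1) - xs) ⬝ᵥ S.mulVec (x (k+1) - xs)))) := by
    intro k
    have h := congrArg (fun w => (x (k+1) - xs) ⬝ᵥ w) (key1 k)
    have hb := h2B (x (k+1) - xs)
    simp only [dotProduct_sub, dotProduct_neg, dotProduct_smul, dotProduct_add,
      smul_eq_mul] at h hb ⊢
    have hbα : α * (2 * ((x (k+1) - xs) ⬝ᵥ B.mulVec (x (k+1) - xs)))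
        = α * ((x (k+1) - xs) ⬝ᵥ S.mulVec (x (k+1) - xs)) := by rw [hb]
    linarith [h, hbα]
  -- positive semidefiniteness-type bounds
  have hpsd : ∀ w : Fin n → ℝ, 0 ≤ w ⬝ᵥ w - α * (w ⬝ᵥ S.mulVec w) := by
    intro w
    have h1 := (abs_le.mp (hquad w)).2
    have h2 := hdotself w
    nlinarith [mul_le_mul_of_nonneg_left h1 hα0.le,
      mul_le_mul_of_nonneg_right hαL.le h2]
  have hexpand : ∀ v w : Fin n → ℝ,
      (w - v) ⬝ᵥ (w - v) - α * ((w - v) ⬝ᵥ S.mulVec (w - v))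
        = (w ⬝ᵥ w - α * (w ⬝ᵥ S.mulVec w)) - 2 * (w ⬝ᵥ v - α * (w ⬝ᵥ S.mulVec v))
          + (v ⬝ᵥ v - α * (v ⬝ᵥ S.mulVec v)) := by
    intro v w
    simp only [Matrix.mulVec_sub, sub_dotProduct, dotProduct_sub]
    rw [dotProduct_comm v w, hsymm v w]
    ring
  -- one–step decay of the Lyapunov function (scalar form)
  have main1 : ∀ k,
      (1 + α * μ) * ((x (k+1) - xs) ⬝ᵥ (x (k+1) - xs)
          - α * ((x (k+1) - xs) ⬝ᵥ S.mulVec (x (k+1) - xs)))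
        ≤ (x k - xs) ⬝ᵥ (x k - xs) - α * ((x k - xs) ⬝ᵥ S.mulVec (x k - xs)) := by
    intro k
    have hsc := hscalar k
    have hp := hpsd ((x (k+1) - xs) - (x k - xs))
    have hexp := hexpand (x k - xs) (x (k+1) - xs)
    rw [hexp] at hp
    -- upper bound m₁ ≤ 2 a₁
    have hup : (x (k+1) - xs) ⬝ᵥ (x (k+1) - xs)
          - α * ((x (k+1) - xs) ⬝ᵥ S.mulVec (x (k+1) - xs))
        ≤ 2 * ((x (k+1) - xs) ⬝ᵥ (x (k+1) - xs)) := by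
      have h1 := (abs_le.mp (hquad (x (k+1) - xs))).1
      have h2 := hdotself (x (k+1) - xs)
      nlinarith [mul_nonneg hα0.le (by linarith :
          (0:ℝ) ≤ (x (k+1) - xs) ⬝ᵥ S.mulVec (x (k+1) - xs)
            + L * ((x (k+1) - xs) ⬝ᵥ (x (k+1) - xs))),
        mul_nonneg (by linarith : (0:ℝ) ≤ 1 - α * L) h2]
    nlinarith [mul_le_mul_of_nonneg_left hup (mul_nonneg hα0.le hμ.le)]
  have hαμ : 0 < 1 + α * μ := by nlinarith
  constructor
  · intro k
    rw [mexp, mexp, inv_mul_eq_div, le_div_iff₀ hαμ]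
    have := main1 k
    nlinarith [this]
  · intro hαval k
    have hhalf : α * L = 1 / 2 := by
      rw [hαval]
      field_simp
    have hαμ' : 1 + α * μ = 1 + μ / (2 * L) := by
      rw [hαval]; ring
    set K : ℝ := 1 + μ / (2 * L) with hK
    have hKpos : 0 < K := by
      have : 0 < μ / (2 * L) := div_pos hμ (by linarith)
      rw [hK]; linarith
    have hKinv : 0 ≤ K⁻¹ := inv_nonneg.mpr hKpos.le
    -- sandwich bounds at α L = 1/2
    have hlow : ∀ v : Fin n → ℝ,
        v ⬝ᵥ v ≤ 2 * (v ⬝ᵥ v - α * (v ⬝ᵥ S.mulVec v)) := by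
      intro v
      have h1 := (abs_le.mp (hquad v)).2
      have h2 := hdotself v
      nlinarith [mul_le_mul_of_nonneg_left h1 hα0.le]
    have hhigh : (x 0 - xs) ⬝ᵥ (x 0 - xs)
          - α * ((x 0 - xs) ⬝ᵥ S.mulVec (x 0 - xs))
        ≤ (3/2) * ((x 0 - xs) ⬝ᵥ (x 0 - xs)) := by
      have h1 := (abs_le.mp (hquad (x 0 - xs))).1
      have h2 := hdotself (x 0 - xs)
      nlinarith [mul_le_mul_of_nonneg_left h1 hα0.le]
    -- geometric decay of the Lyapunov function
    have hmk : ∀ k, (x k - xs) ⬝ᵥ (x k - xs)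
          - α * ((x k - xs) ⬝ᵥ S.mulVec (x k - xs))
        ≤ K⁻¹ ^ k * ((x 0 - xs) ⬝ᵥ (x 0 - xs)
          - α * ((x 0 - xs) ⬝ᵥ S.mulVec (x 0 - xs))) := by
      intro k
      induction k with
      | zero => simp
      | succ k ih =>
        have h1 := main1 k
        rw [hαμ'] at h1
        have h2 : (x (k+1) - xs) ⬝ᵥ (x (k+1) - xs)
            - α * ((x (k+1) - xs) ⬝ᵥ S.mulVec (x (k+1) - xs))
            ≤ K⁻¹ * ((x k - xs) ⬝ᵥ (x k - xs)
              - α * ((x k - xs) ⬝ᵥ S.mulVec (x k - xs))) := by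
          rw [inv_mul_eq_div, le_div_iff₀ hKpos]
          nlinarith [h1]
        calc (x (k+1) - xs) ⬝ᵥ (x (k+1) - xs)
            - α * ((x (k+1) - xs) ⬝ᵥ S.mulVec (x (k+1) - xs))
            ≤ K⁻¹ * ((x k - xs) ⬝ᵥ (x k - xs)
              - α * ((x k - xs) ⬝ᵥ S.mulVec (x k - xs))) := h2
          _ ≤ K⁻¹ * (K⁻¹ ^ k * ((x 0 - xs) ⬝ᵥ (x 0 - xs)
              - α * ((x 0 - xs) ⬝ᵥ S.mulVec (x 0 - xs)))) :=
            mul_le_mul_of_nonneg_left ih hKinv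
          _ = K⁻¹ ^ (k+1) * ((x 0 - xs) ⬝ᵥ (x 0 - xs)
              - α * ((x 0 - xs) ⬝ᵥ S.mulVec (x 0 - xs))) := by ring
    have hKk : 0 ≤ K⁻¹ ^ k := pow_nonneg hKinv k
    have h1 := hlow (x k - xs)
    have h2 := hmk k
    have h3 := mul_le_mul_of_nonneg_left hhigh hKk
    linarith [h1,
      mul_le_mul_of_nonneg_left h2 (by norm_num : (0:ℝ) ≤ 2),
      mul_le_mul_of_nonneg_left h3 (by norm_num : (0:ℝ) ≤ 2)]
end

section
/- Let F : ℝ^n → ℝ be differentiable with F ∈ S_{μ, L_F} for some μ > 0, let N be a real n×n skew-symmetric matrix and B a real n×n matrix with N = B^sym − 2B where B^sym = B + Bᵀ and L_{B^sym} = ‖B^sym‖, and let x* satisfy ∇F(x*) + N x* = 0. Suppose 0 < α < 1/max{2L_{B^sym}, 2L_F} and the sequence (x_k) satisfies the gradient and skew-symmetric splitting (GSS) iteration (x_{k+1} − x_k)/α = −(∇F(x_k) + B^sym x_k − 2B x_{k+1}). Then E^{αBD}(x_{k+1}) ≤ (1 + αμ)^{−1} E^{αBD}(x_k) for every k, where E^{αBD}(x)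 := (1/2)‖x − x*‖²_{I − αB^sym} − α D_F(x*, x). Moreover, for α = min{1/(4L_{B^sym}), 1/(4L_F)}, one has ‖x_k − x*‖² ≤ (1 + 1/max{4L_{B^sym}/μ, 4L_F/μ})^{−k} · 6‖x_0 − x*‖² for all k. -/
open Matrix

/-- The continuous linear functional `v ↦ ⟨z, v⟩` on `ℝⁿ`. -/
noncomputable def dpCLM {m : ℕ} (z : Fin m → ℝ) : (Fin m → ℝ) →L[ℝ] ℝ :=
  LinearMap.toContinuousLinearMap
    { toFun := fun v => z ⬝ᵥ v
      map_add' := fun a b => by simp [dotProduct_add]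
      map_smul' := fun c a => by simp [dotProduct_smul] }

lemma dot_self_nonneg' {m : ℕ} (a : Fin m → ℝ) : 0 ≤ a ⬝ᵥ a :=
  Finset.sum_nonneg fun _ _ => mul_self_nonneg _

lemma dot_sym' {m : ℕ} {M : Matrix (Fin m) (Fin m) ℝ} (h : Mᵀ = M) (a b : Fin m → ℝ) :
    a ⬝ᵥ M.mulVec b = b ⬝ᵥ M.mulVec a := by
  rw [Matrix.dotProduct_mulVec, ← h, Matrix.vecMul_transpose, dotProduct_comm, h]

lemma dot_skew' {m : ℕ} {M : Matrix (Fin m) (Fin m) ℝ} (h : Mᵀ = -M) (a : Fin m → ℝ) :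
    a ⬝ᵥ M.mulVec a = 0 := by
  have h1 : a ⬝ᵥ M.mulVec a = (M.vecMul a) ⬝ᵥ a := Matrix.dotProduct_mulVec a M a
  have h2 : M.vecMul a = Mᵀ.mulVec a := (Matrix.mulVec_transpose M a).symm
  rw [h2, h] at h1
  simp [Matrix.neg_mulVec, neg_dotProduct, dotProduct_comm] at h1
  linarith [h1]

lemma spec_bound' {m : ℕ} (M : Matrix (Fin m) (Fin m) ℝ) (a : Fin m → ℝ) :
    |a ⬝ᵥ M.mulVec a| ≤ specNorm M * (a ⬝ᵥ a) := by
  set a' : EuclideanSpace ℝ (Fin m) := (WithLp.equiv 2 _).symm a with ha'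
  have hdot : a ⬝ᵥ M.mulVec a = inner ℝ a' (Matrix.toEuclideanCLM (𝕜 := ℝ) M a') := by
    rw [Matrix.inner_toEuclideanCLM]; rfl
  have hn : ‖a'‖ ^ 2 = a ⬝ᵥ a := by
    rw [← real_inner_self_eq_norm_sq]
    rfl
  calc |a ⬝ᵥ M.mulVec a| ≤ ‖a'‖ * ‖Matrix.toEuclideanCLM (𝕜 := ℝ) M a'‖ := by
        rw [hdot]; exact abs_real_inner_le_norm _ _
    _ ≤ ‖a'‖ * (‖Matrix.toEuclideanCLM (𝕜 := ℝ) M‖ * ‖a'‖) := by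
        gcongr; exact (Matrix.toEuclideanCLM (𝕜 := ℝ) M).le_opNorm a'
    _ = specNorm M * (a ⬝ᵥ a) := by rw [← hn]; ring_nf; rfl

set_option maxHeartbeats 1600000

/-- **Linear convergence of the gradient and skew-symmetric splitting (GSS) method.**
For `F ∈ S_{μ,L_F}` (`μ > 0`), `N = Bˢʸᵐ - 2B` skew-symmetric with `Bˢʸᵐ = B + Bᵀ`,
`∇F(x*) + N x* = 0`, step size `0 < α < 1/max{2‖Bˢʸᵐ‖, 2L_F}`, and iteration
`(x_{k+1} - x_k)/α = -(∇F(x_k) + Bˢʸᵐ x_k - 2B x_{k+1})`, the Lyapunov function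
`E(x) = ½‖x - x*‖²_{I-αBˢʸᵐ} - α D_F(x*, x)` decays as `E(x_{k+1}) ≤ (1+αμ)⁻¹E(x_k)`;
moreover for `α = min{1/(4‖Bˢʸᵐ‖), 1/(4L_F)}` one has
`‖x_k - x*‖² ≤ (1 + 1/max{4‖Bˢʸᵐ‖/μ, 4L_F/μ})⁻ᵏ · 6‖x_0 - x*‖²`. -/
theorem gss_linear_convergence
    {n : ℕ} (μ LF α : ℝ) (hμ : 0 < μ)
    (F : (Fin n → ℝ) → ℝ) (gradF : (Fin n → ℝ) → (Fin n → ℝ))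
    (hdiff : ∀ x, HasFDerivAt F (dpCLM (gradF x)) x)
    (hlower : ∀ x y : Fin n → ℝ,
      μ / 2 * ((x - y) ⬝ᵥ (x - y)) ≤ F x - F y - gradF y ⬝ᵥ (x - y))
    (hupper : ∀ x y : Fin n → ℝ,
      F x - F y - gradF y ⬝ᵥ (x - y) ≤ LF / 2 * ((x - y) ⬝ᵥ (x - y)))
    (N B : Matrix (Fin n) (Fin n) ℝ)
    (hskew : Nᵀ = -N)
    (hNB : N = (B + Bᵀ) - (2 : ℝ) • B)
    (xs : Fin n → ℝ) (hxs : gradF xs + N.mulVec xs = 0)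
    (hα0 : 0 < α)
    (hα1 : α < 1 / max (2 * specNorm (B + Bᵀ)) (2 * LF))
    (x : ℕ → (Fin n → ℝ))
    (hiter : ∀ k, x (k + 1) - x k =
      -(α • (gradF (x k) + (B + Bᵀ).mulVec (x k) - (2 : ℝ) • B.mulVec (x (k + 1))))) :
    (∀ k,
      (1 / 2) * ((x (k + 1) - xs) ⬝ᵥ ((1 - α • (B + Bᵀ)).mulVec (x (k + 1) - xs)))
          - α * (F xs - F (x (k + 1)) - gradF (x (k + 1)) ⬝ᵥ (xs - x (k + 1)))
        ≤ (1 + α * μ)⁻¹ *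
          ((1 / 2) * ((x k - xs) ⬝ᵥ ((1 - α • (B + Bᵀ)).mulVec (x k - xs)))
            - α * (F xs - F (x k) - gradF (x k) ⬝ᵥ (xs - x k)))) ∧
    (α = min (1 / (4 * specNorm (B + Bᵀ))) (1 / (4 * LF)) → ∀ k,
      (x k - xs) ⬝ᵥ (x k - xs)
        ≤ ((1 + 1 / max (4 * specNorm (B + Bᵀ) / μ) (4 * LF / μ))⁻¹) ^ k
            * (6 * ((x 0 - xs) ⬝ᵥ (x 0 - xs)))) := by
  have hsym : (B + Bᵀ)ᵀ = B + Bᵀ := by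
    rw [Matrix.transpose_add, Matrix.transpose_transpose, add_comm]
  obtain ⟨LB, hLBdef⟩ : ∃ L, L = specNorm (B + Bᵀ) := ⟨_, rfl⟩
  rw [← hLBdef] at hα1 ⊢
  have hmaxpos : 0 < max (2 * LB) (2 * LF) :=
    one_div_pos.mp (lt_trans hα0 hα1)
  have hαmax : α * max (2 * LB) (2 * LF) < 1 :=
    (lt_div_iff₀ hmaxpos).mp hα1
  have hLB : α * LB ≤ 1 / 2 := by
    have h1 : α * (2 * LB) ≤ α * max (2 * LB) (2 * LF) :=
      mul_le_mul_of_nonneg_left (le_max_left _ _) hα0.le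
    nlinarith
  have hLF2 : α * LF ≤ 1 / 2 := by
    have h1 : α * (2 * LF) ≤ α * max (2 * LB) (2 * LF) :=
      mul_le_mul_of_nonneg_left (le_max_right _ _) hα0.le
    nlinarith
  have hden : (0 : ℝ) < 1 + α * μ := by nlinarith
  have expand : ∀ v : Fin n → ℝ, v ⬝ᵥ ((1 - α • (B + Bᵀ)) *ᵥ v)
      = v ⬝ᵥ v - α * (v ⬝ᵥ (B + Bᵀ) *ᵥ v) := fun v => by
    simp only [Matrix.sub_mulVec, Matrix.one_mulVec, Matrix.smul_mulVec,
      dotProduct_sub, dotProduct_smul, smul_eq_mul]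
  have part1 : ∀ k,
      (1 / 2) * ((x (k + 1) - xs) ⬝ᵥ ((1 - α • (B + Bᵀ)).mulVec (x (k + 1) - xs)))
          - α * (F xs - F (x (k + 1)) - gradF (x (k + 1)) ⬝ᵥ (xs - x (k + 1)))
        ≤ (1 + α * μ)⁻¹ *
          ((1 / 2) * ((x k - xs) ⬝ᵥ ((1 - α • (B + Bᵀ)).mulVec (x k - xs)))
            - α * (F xs - F (x k) - gradF (x k) ⬝ᵥ (xs - x k))) := by
    intro k
    have h2 : gradF xs + ((B + Bᵀ) *ᵥ xs - (2 : ℝ) • (B *ᵥ xs)) = 0 := by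
      have h := hxs
      rw [hNB] at h
      simpa [Matrix.sub_mulVec, Matrix.smul_mulVec] using h
    have hv : x (k + 1) - x k - α • ((B + Bᵀ) *ᵥ (x (k + 1) - xs) - (B + Bᵀ) *ᵥ (x k - xs))
        = (-α) • ((gradF (x k) - gradF xs) + N *ᵥ (x (k + 1) - xs)) := by
      rw [hNB]
      simp only [Matrix.sub_mulVec, Matrix.smul_mulVec, Matrix.mulVec_sub]
      linear_combination (norm := module) hiter k + (-α) • h2
    have h4 := congrArg (fun z => (x (k + 1) - xs) ⬝ᵥ z) hv
    simp only [dotProduct_smul, dotProduct_add, smul_eq_mul] at h4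
    rw [dot_skew' hskew] at h4
    -- spectral / Bregman pieces
    have P1 : α * ((x (k + 1) - x k) ⬝ᵥ (B + Bᵀ) *ᵥ (x (k + 1) - x k))
        ≤ 1 / 2 * ((x (k + 1) - x k) ⬝ᵥ (x (k + 1) - x k)) := by
      have hb0 := spec_bound' (B + Bᵀ) (x (k + 1) - x k)
      rw [← hLBdef] at hb0
      have hb := (abs_le.mp hb0).2
      have hd := dot_self_nonneg' (x (k + 1) - x k)
      nlinarith [mul_le_mul_of_nonneg_left hb hα0.le, mul_le_mul_of_nonneg_right hLB hd]
    have P2 : α * (F (x (k + 1)) - F (x k) - gradF (x k) ⬝ᵥ (x (k + 1) - x k))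
        ≤ 1 / 4 * ((x (k + 1) - x k) ⬝ᵥ (x (k + 1) - x k)) := by
      have h := hupper (x (k + 1)) (x k)
      have hd := dot_self_nonneg' (x (k + 1) - x k)
      nlinarith [mul_le_mul_of_nonneg_left h hα0.le, mul_le_mul_of_nonneg_right hLF2 hd]
    have P4' : -(1 / 2 * ((x (k + 1) - xs) ⬝ᵥ (x (k + 1) - xs)))
        ≤ α * ((x (k + 1) - xs) ⬝ᵥ (B + Bᵀ) *ᵥ (x (k + 1) - xs)) := by
      have hb0 := spec_bound' (B + Bᵀ) (x (k + 1) - xs)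
      rw [← hLBdef] at hb0
      have hb := (abs_le.mp hb0).1
      have hd := dot_self_nonneg' (x (k + 1) - xs)
      nlinarith [mul_le_mul_of_nonneg_left hb hα0.le, mul_le_mul_of_nonneg_right hLB hd]
    have P4 := mul_le_mul_of_nonneg_left P4' (mul_nonneg hα0.le hμ.le)
    have P5 := hlower xs (x (k + 1))
    have P5a := mul_le_mul_of_nonneg_left P5 hα0.le
    have P5b := mul_le_mul_of_nonneg_left P5
      (by positivity : (0 : ℝ) ≤ α * α * μ)
    have P6 := hlower (x (k + 1)) xs
    have P6a := mul_le_mul_of_nonneg_left P6 hα0.le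
    have P8 : (0 : ℝ) ≤ α * α * μ * μ * ((xs - x (k + 1)) ⬝ᵥ (xs - x (k + 1))) :=
      mul_nonneg (by positivity) (dot_self_nonneg' _)
    have P9 : (0 : ℝ) ≤ α * μ * ((xs - x (k + 1)) ⬝ᵥ (xs - x (k + 1))) :=
      mul_nonneg (by positivity) (dot_self_nonneg' _)
    rw [le_inv_mul_iff₀ hden]
    -- canonical orientation equalities
    have cba : x k ⬝ᵥ x (k + 1) = x (k + 1) ⬝ᵥ x k := dotProduct_comm _ _
    have cca : xs ⬝ᵥ x (k + 1) = x (k + 1) ⬝ᵥ xs := dotProduct_comm _ _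
    have ccb : xs ⬝ᵥ x k = x k ⬝ᵥ xs := dotProduct_comm _ _
    have mba : x k ⬝ᵥ (B + Bᵀ) *ᵥ x (k + 1) = x (k + 1) ⬝ᵥ (B + Bᵀ) *ᵥ x k :=
      dot_sym' hsym _ _
    have mca : xs ⬝ᵥ (B + Bᵀ) *ᵥ x (k + 1) = x (k + 1) ⬝ᵥ (B + Bᵀ) *ᵥ xs :=
      dot_sym' hsym _ _
    have mcb : xs ⬝ᵥ (B + Bᵀ) *ᵥ x k = x k ⬝ᵥ (B + Bᵀ) *ᵥ xs := dot_sym' hsym _ _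
    have gba : x (k + 1) ⬝ᵥ gradF (x k) = gradF (x k) ⬝ᵥ x (k + 1) :=
      dotProduct_comm _ _
    have gbc : xs ⬝ᵥ gradF (x k) = gradF (x k) ⬝ᵥ xs := dotProduct_comm _ _
    have gsa : x (k + 1) ⬝ᵥ gradF xs = gradF xs ⬝ᵥ x (k + 1) := dotProduct_comm _ _
    have gsc : xs ⬝ᵥ gradF xs = gradF xs ⬝ᵥ xs := dotProduct_comm _ _
    have gpa : x (k + 1) ⬝ᵥ gradF (x (k + 1)) = gradF (x (k + 1)) ⬝ᵥ x (k + 1) :=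
      dotProduct_comm _ _
    have gpc : xs ⬝ᵥ gradF (x (k + 1)) = gradF (x (k + 1)) ⬝ᵥ xs :=
      dotProduct_comm _ _
    simp only [Matrix.sub_mulVec, Matrix.one_mulVec, Matrix.smul_mulVec,
      Matrix.mulVec_sub, dotProduct_sub, sub_dotProduct,
      dotProduct_add, add_dotProduct, dotProduct_smul,
      smul_dotProduct, dotProduct_neg, neg_dotProduct,
      smul_eq_mul, cba, cca, ccb, mba, mca, mcb, gba, gbc, gsa, gsc, gpa, gpc]
      at h4 P1 P2 P4 P5a P5b P6a P8 P9 ⊢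
    linarith [h4, P1, P2, P4, P5a, P5b, P6a, P8, P9]
  refine ⟨part1, ?_⟩
  intro hmin k
  have hminpos : 0 < min (1 / (4 * LB)) (1 / (4 * LF)) := hmin ▸ hα0
  have hLBpos : 0 < LB := by
    have h1 : 0 < 1 / (4 * LB) :=
      lt_of_lt_of_le hminpos (min_le_left _ _)
    have h2 := one_div_pos.mp h1
    linarith
  have hLFpos : 0 < LF := by
    have h1 : 0 < 1 / (4 * LF) := lt_of_lt_of_le hminpos (min_le_right _ _)
    have h2 := one_div_pos.mp h1
    linarith
  have hα4LB : α * LB ≤ 1 / 4 := by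
    have h1 : α ≤ 1 / (4 * LB) := hmin ▸ min_le_left _ _
    rw [le_div_iff₀ (by linarith)] at h1
    nlinarith
  have hα4LF : α * LF ≤ 1 / 4 := by
    have h1 : α ≤ 1 / (4 * LF) := hmin ▸ min_le_right _ _
    rw [le_div_iff₀ (by linarith)] at h1
    nlinarith
  have hQ : 1 / max (4 * LB / μ) (4 * LF / μ) = α * μ := by
    rcases le_total (LB) LF with h | h
    · rw [max_eq_right ((div_le_div_iff_of_pos_right hμ).mpr (by linarith :
          4 * LB ≤ 4 * LF)), hmin,
        min_eq_right (one_div_le_one_div_of_le (by linarith) (by linarith)),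
        one_div_div]
      ring
    · rw [max_eq_left ((div_le_div_iff_of_pos_right hμ).mpr (by linarith :
          4 * LF ≤ 4 * LB)), hmin,
        min_eq_left (one_div_le_one_div_of_le (by linarith) (by linarith)),
        one_div_div]
      ring
  rw [hQ]
  set E : ℕ → ℝ := fun j =>
    (1 / 2) * ((x j - xs) ⬝ᵥ ((1 - α • (B + Bᵀ)).mulVec (x j - xs)))
      - α * (F xs - F (x j) - gradF (x j) ⬝ᵥ (xs - x j)) with hE
  have hEj : ∀ j, E j = (1 / 2) * ((x j - xs) ⬝ᵥ ((1 - α • (B + Bᵀ)).mulVec (x j - xs)))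
      - α * (F xs - F (x j) - gradF (x j) ⬝ᵥ (xs - x j)) := fun j => by rw [hE]
  have hqnn : (0 : ℝ) ≤ (1 + α * μ)⁻¹ := inv_nonneg.mpr hden.le
  have hEdecay : ∀ j, E j ≤ ((1 + α * μ)⁻¹) ^ j * E 0 := by
    intro j
    induction j with
    | zero => simp
    | succ j ih =>
      have h := part1 j
      rw [← hEj (j + 1), ← hEj j] at h
      calc E (j + 1) ≤ (1 + α * μ)⁻¹ * E j := h
        _ ≤ (1 + α * μ)⁻¹ * (((1 + α * μ)⁻¹) ^ j * E 0) :=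
            mul_le_mul_of_nonneg_left ih hqnn
        _ = ((1 + α * μ)⁻¹) ^ (j + 1) * E 0 := by ring
  have hlowE : ∀ j, 1 / 4 * ((x j - xs) ⬝ᵥ (x j - xs)) ≤ E j := by
    intro j
    rw [hEj j, expand (x j - xs)]
    have hb0 := spec_bound' (B + Bᵀ) (x j - xs)
    rw [← hLBdef] at hb0
    have hb := (abs_le.mp hb0).2
    have hd := dot_self_nonneg' (x j - xs)
    have hup' := hupper xs (x j)
    have heq : (xs - x j) ⬝ᵥ (xs - x j) = (x j - xs) ⬝ᵥ (x j - xs) := by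
      rw [show xs - x j = -(x j - xs) from (neg_sub _ _).symm, neg_dotProduct,
        dotProduct_neg]
      ring
    rw [heq] at hup'
    nlinarith [mul_le_mul_of_nonneg_left hb hα0.le, mul_le_mul_of_nonneg_right hα4LB hd,
      mul_le_mul_of_nonneg_left hup' hα0.le, mul_le_mul_of_nonneg_right hα4LF hd]
  have hupE : E 0 ≤ 5 / 8 * ((x 0 - xs) ⬝ᵥ (x 0 - xs)) := by
    rw [hEj 0, expand (x 0 - xs)]
    have hb0 := spec_bound' (B + Bᵀ) (x 0 - xs)
    rw [← hLBdef] at hb0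
    have hb := (abs_le.mp hb0).1
    have hd := dot_self_nonneg' (x 0 - xs)
    have hlow' := hlower xs (x 0)
    have heq : (xs - x 0) ⬝ᵥ (xs - x 0) = (x 0 - xs) ⬝ᵥ (x 0 - xs) := by
      rw [show xs - x 0 = -(x 0 - xs) from (neg_sub _ _).symm, neg_dotProduct,
        dotProduct_neg]
      ring
    rw [heq] at hlow'
    nlinarith [mul_le_mul_of_nonneg_left hb hα0.le, mul_le_mul_of_nonneg_right hα4LB hd,
      mul_le_mul_of_nonneg_left hlow' hα0.le,
      mul_nonneg (mul_nonneg hα0.le hμ.le) hd]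
  have hqpow : (0 : ℝ) ≤ ((1 + α * μ)⁻¹) ^ k := pow_nonneg hqnn k
  have h1 := hEdecay k
  have h2 := mul_le_mul_of_nonneg_left hupE hqpow
  have h3 := hlowE k
  have h5 := mul_nonneg hqpow (dot_self_nonneg' (x 0 - xs))
  linarith
end

section
/- (Strong Lyapunov property of the accelerated gradient flow.) Let F : ℝ^n → ℝ be differentiable with F ∈ S_μ, μ > 0, let N be a real n×n skew-symmetric matrix, and let x* satisfy ∇F(x*) + N x* = 0. Define the Lyapunov function E(x,y) = D_F(x, x*) + (μ/2)‖y − x*‖² and the vector field G(x,y) = (G^x, G^y) with G^x = y − x and G^y = x − y − (1/μ)(∇F(x) + N y). Then for all x, y ∈ ℝ^n, −⟨∇F(x) − ∇F(x*), G^x⟩ − μ⟨y − x*, G^y⟩ ≥ E(x,y) + (μ/2)‖y − x‖². -/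
open Matrix

/-- **Strong Lyapunov property of the accelerated gradient flow.**
For `F ∈ S_μ` (`μ > 0`) differentiable, `N` skew-symmetric, and `x*` with
`∇F(x*) + N x* = 0`, let `E(x,y) = D_F(x,x*) + (μ/2)‖y - x*‖²` and
`G = (y - x, x - y - (1/μ)(∇F(x) + Ny))`.  Then
`-⟨∇F(x) - ∇F(x*), Gˣ⟩ - μ⟨y - x*, Gʸ⟩ ≥ E(x,y) + (μ/2)‖y - x‖²`. -/
theorem accelerated_flow_strong_lyapunov
    {n : ℕ} (μ : ℝ) (hμ : 0 < μ)
    (F : (Fin n → ℝ) → ℝ) (gradF : (Fin n → ℝ) → (Fin n → ℝ))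
    (hdiff : ∀ x, HasFDerivAt F (dpCLM (gradF x)) x)
    (hlower : ∀ x y : Fin n → ℝ,
      μ / 2 * ((x - y) ⬝ᵥ (x - y)) ≤ F x - F y - gradF y ⬝ᵥ (x - y))
    (N : Matrix (Fin n) (Fin n) ℝ) (hskew : Nᵀ = -N)
    (xs : Fin n → ℝ) (hxs : gradF xs + N.mulVec xs = 0) :
    ∀ x y : Fin n → ℝ,
      (F x - F xs - gradF xs ⬝ᵥ (x - xs)) + μ / 2 * ((y - xs) ⬝ᵥ (y - xs))
          + μ / 2 * ((y - x) ⬝ᵥ (y - x))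
        ≤ -((gradF x - gradF xs) ⬝ᵥ (y - x))
          - μ * ((y - xs) ⬝ᵥ (x - y - (1 / μ) • (gradF x + N.mulVec y))) := by
  intro x y
  have hNxs : N.mulVec xs = -gradF xs := by
    have := hxs
    linear_combination (norm := module) this
  have hb : (y - xs) ⬝ᵥ N.mulVec (y - xs) = 0 := by
    have h1 : (y - xs) ⬝ᵥ N.mulVec (y - xs)
        = (Nᵀ *ᵥ (y - xs)) ⬝ᵥ (y - xs) := by
      rw [Matrix.dotProduct_mulVec, Matrix.mulVec_transpose]
    rw [hskew, Matrix.neg_mulVec, neg_dotProduct] at h1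
    have h2 : (N *ᵥ (y - xs)) ⬝ᵥ (y - xs) = (y - xs) ⬝ᵥ (N *ᵥ (y - xs)) :=
      dotProduct_comm _ _
    linarith
  have h1 := hlower xs x
  have hμ' : μ ≠ 0 := ne_of_gt hμ
  simp only [smul_add, dotProduct_add, dotProduct_sub,
    sub_dotProduct, add_dotProduct, dotProduct_smul,
    Matrix.mulVec_sub, Matrix.mulVec_add, hNxs, dotProduct_neg,
    neg_dotProduct, smul_eq_mul] at *
  have hcomm1 : xs ⬝ᵥ x = x ⬝ᵥ xs := dotProduct_comm _ _
  have hcomm2 : xs ⬝ᵥ y = y ⬝ᵥ xs := dotProduct_comm _ _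
  have hcomm3 : x ⬝ᵥ y = y ⬝ᵥ x := dotProduct_comm _ _
  have hcomm4 : xs ⬝ᵥ gradF x = gradF x ⬝ᵥ xs := dotProduct_comm _ _
  have hcomm5 : y ⬝ᵥ gradF x = gradF x ⬝ᵥ y := dotProduct_comm _ _
  have hcomm6 : xs ⬝ᵥ gradF xs = gradF xs ⬝ᵥ xs := dotProduct_comm _ _
  have hcomm7 : y ⬝ᵥ gradF xs = gradF xs ⬝ᵥ y := dotProduct_comm _ _
  have hcomm8 : x ⬝ᵥ gradF x = gradF x ⬝ᵥ x := dotProduct_comm _ _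
  have hcomm9 : x ⬝ᵥ gradF xs = gradF xs ⬝ᵥ x := dotProduct_comm _ _
  field_simp
  nlinarith [h1, hb, hcomm1, hcomm2, hcomm3, hcomm4, hcomm5, hcomm6, hcomm7,
    hcomm8, hcomm9, hμ, mul_pos hμ hμ]
end

section
/- Let F : ℝ^n → ℝ be differentiable with F ∈ S_μ, μ > 0, let N be a real n×n skew-symmetric matrix, and let x* satisfy ∇F(x*) + N x* = 0. Suppose α_k > 0 and the points x̂_{k+1}, y_{k+1} satisfy the IMEX step (x̂_{k+1} − x_k)/α_k = y_k − x̂_{k+1} and (y_{k+1} − y_k)/α_k = x̂_{k+1} − y_{k+1} − (1/μ)(∇F(x̂_{k+1}) + N y_{k+1}). Then, with E(x,y) = D_F(x,x*) + (μ/2)‖y − x*‖², E_k = E(x_k, y_k) and Ê_{k+1} = E(x̂_{k+1}, y_{k+1}), one has Ê_{k+1} − E_k ≤ −α_k Ê_{k+1} − α_k⟨∇F(x̂_{k+1}) − ∇F(x*), y_{k+1} − y_k⟩ − (μ/2)‖y_{k+1} − y_k‖² − (α_k μ/2)‖y_{k+1} − x̂_{k+1}‖² − (μ/2)‖x̂_{k+1}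 − x_k‖². -/
open Matrix

/-- **One-step decay estimate of the IMEX scheme for the accelerated gradient flow.**
With `E(x,y) = D_F(x,x*) + (μ/2)‖y - x*‖²`, if
`(x̂₊ - x)/α = y - x̂₊` and `(y₊ - y)/α = x̂₊ - y₊ - (1/μ)(∇F(x̂₊) + N y₊)`, then
`E(x̂₊,y₊) - E(x,y) ≤ -α E(x̂₊,y₊) - α⟨∇F(x̂₊) - ∇F(x*), y₊ - y⟩ - (μ/2)‖y₊ - y‖²
 - (αμ/2)‖y₊ - x̂₊‖² - (μ/2)‖x̂₊ - x‖²`. -/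
theorem imex_one_step_decay
    {n : ℕ} (μ αk : ℝ) (hμ : 0 < μ) (hαk : 0 < αk)
    (F : (Fin n → ℝ) → ℝ) (gradF : (Fin n → ℝ) → (Fin n → ℝ))
    (hdiff : ∀ x, HasFDerivAt F (dpCLM (gradF x)) x)
    (hlower : ∀ x y : Fin n → ℝ,
      μ / 2 * ((x - y) ⬝ᵥ (x - y)) ≤ F x - F y - gradF y ⬝ᵥ (x - y))
    (N : Matrix (Fin n) (Fin n) ℝ) (hskew : Nᵀ = -N)
    (xs : Fin n → ℝ) (hxs : gradF xs + N.mulVec xs = 0)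
    (xk yk xhat yk1 : Fin n → ℝ)
    (hstep1 : xhat - xk = αk • (yk - xhat))
    (hstep2 : yk1 - yk =
      αk • (xhat - yk1 - (1 / μ) • (gradF xhat + N.mulVec yk1))) :
    ((F xhat - F xs - gradF xs ⬝ᵥ (xhat - xs)) + μ / 2 * ((yk1 - xs) ⬝ᵥ (yk1 - xs)))
      - ((F xk - F xs - gradF xs ⬝ᵥ (xk - xs)) + μ / 2 * ((yk - xs) ⬝ᵥ (yk - xs)))
      ≤ -(αk * ((F xhat - F xs - gradF xs ⬝ᵥ (xhat - xs))
            + μ / 2 * ((yk1 - xs) ⬝ᵥ (yk1 - xs))))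
        - αk * ((gradF xhat - gradF xs) ⬝ᵥ (yk1 - yk))
        - μ / 2 * ((yk1 - yk) ⬝ᵥ (yk1 - yk))
        - αk * μ / 2 * ((yk1 - xhat) ⬝ᵥ (yk1 - xhat))
        - μ / 2 * ((xhat - xk) ⬝ᵥ (xhat - xk)) := by
  -- skew-symmetry fact
  have e4 : (yk1 - xs) ⬝ᵥ N.mulVec (yk1 - xs) = 0 := by
    set v := yk1 - xs
    have h := Matrix.dotProduct_mulVec v N v
    rw [← Matrix.mulVec_transpose, hskew, Matrix.neg_mulVec, neg_dotProduct,
      dotProduct_comm] at h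
    rw [dotProduct_comm]
    linarith
  have e3 : (yk1 - xs) ⬝ᵥ (gradF xs + N.mulVec xs) = 0 := by
    rw [hxs, dotProduct_zero]
  have e1 : (xhat - xk) ⬝ᵥ (gradF xhat - gradF xs)
      = αk * ((yk - xhat) ⬝ᵥ (gradF xhat - gradF xs)) := by
    rw [hstep1, smul_dotProduct, smul_eq_mul]
  have e2 : μ * ((yk1 - yk) ⬝ᵥ (yk1 - xs))
      = αk * μ * ((xhat - yk1) ⬝ᵥ (yk1 - xs))
        - αk * ((gradF xhat + N.mulVec yk1) ⬝ᵥ (yk1 - xs)) := by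
    rw [hstep2, smul_dotProduct, sub_dotProduct,
      smul_dotProduct, smul_eq_mul, smul_eq_mul]
    field_simp
  have h1 := hlower xk xhat
  have h2 := hlower xs xhat
  have h2' := mul_le_mul_of_nonneg_left h2 hαk.le
  have e4' : (yk1 - xs) ⬝ᵥ N.mulVec yk1 - (yk1 - xs) ⬝ᵥ N.mulVec xs = 0 := by
    rw [← dotProduct_sub, ← Matrix.mulVec_sub]; exact e4
  simp only [sub_dotProduct, add_dotProduct, dotProduct_sub,
    dotProduct_add, dotProduct_comm] at e1 e2 e3 e4' h1 h2' ⊢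
  nlinarith [e1, e2, e3, e4', h1, h2', sq_nonneg αk]
end

section
/- (Correction step bound.) Let F : ℝ^n → ℝ be differentiable, convex, with D_F(x,y) ≤ (L_F/2)‖x−y‖² for all x,y (L_F > 0), let x* ∈ ℝ^n, μ > 0, and set E(x,y) = D_F(x,x*) + (μ/2)‖y − x*‖². Let c₁, c₂, c₃ > 0 and α_k > 0 with α_k² L_F c₂² ≤ (1 + α_k c₁) c₃. Suppose points x_k, y_k, x̂_{k+1}, y_{k+1} satisfy E(x̂_{k+1}, y_{k+1}) − E(x_k, y_k) ≤ −α_k c₁ E(x̂_{k+1}, y_{k+1}) − α_k c₂ ⟨∇F(x̂_{k+1}) − ∇F(x*), y_{k+1} − y_k⟩ − (c₃/2)‖y_{k+1} − y_k‖², and define x_{k+1} by (1 + α_k c₁)(x_{k+1} − x̂_{k+1}) = α_k c₂ (y_{k+1} − y_k). Then E(x_{k+1}, y_{k+1}) ≤ (1 + α_k c₁)^{−1} E(x_k, y_k). -/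
open Matrix

set_option maxHeartbeats 1000000 in
/-- **Correction step bound.**  Let `F` be differentiable, convex, with
`D_F(x,y) ≤ (L_F/2)‖x-y‖²`, and `E(x,y) = D_F(x,x*) + (μ/2)‖y-x*‖²`.
If `E(x̂₊,y₊) - E(x,y) ≤ -αc₁E(x̂₊,y₊) - αc₂⟨∇F(x̂₊) - ∇F(x*), y₊-y⟩ - (c₃/2)‖y₊-y‖²`,
`α²L_Fc₂² ≤ (1+αc₁)c₃`, and `(1+αc₁)(x₊ - x̂₊) = αc₂(y₊ - y)`, then
`E(x₊,y₊) ≤ (1+αc₁)⁻¹ E(x,y)`. -/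
theorem correction_step_bound
    {n : ℕ} (μ LF c₁ c₂ c₃ αk : ℝ) (hμ : 0 < μ) (hLF : 0 < LF)
    (hc₁ : 0 < c₁) (hc₂ : 0 < c₂) (hc₃ : 0 < c₃) (hαk : 0 < αk)
    (hstep : αk ^ 2 * LF * c₂ ^ 2 ≤ (1 + αk * c₁) * c₃)
    (F : (Fin n → ℝ) → ℝ) (gradF : (Fin n → ℝ) → (Fin n → ℝ))
    (hdiff : ∀ x, HasFDerivAt F (dpCLM (gradF x)) x)
    (hconv : ∀ x y : Fin n → ℝ, 0 ≤ F x - F y - gradF y ⬝ᵥ (x - y))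
    (hupper : ∀ x y : Fin n → ℝ,
      F x - F y - gradF y ⬝ᵥ (x - y) ≤ LF / 2 * ((x - y) ⬝ᵥ (x - y)))
    (xs xk yk xhat yk1 xk1 : Fin n → ℝ)
    (hdecay :
      ((F xhat - F xs - gradF xs ⬝ᵥ (xhat - xs)) + μ / 2 * ((yk1 - xs) ⬝ᵥ (yk1 - xs)))
        - ((F xk - F xs - gradF xs ⬝ᵥ (xk - xs)) + μ / 2 * ((yk - xs) ⬝ᵥ (yk - xs)))
      ≤ -(αk * c₁ * ((F xhat - F xs - gradF xs ⬝ᵥ (xhat - xs))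
            + μ / 2 * ((yk1 - xs) ⬝ᵥ (yk1 - xs))))
        - αk * c₂ * ((gradF xhat - gradF xs) ⬝ᵥ (yk1 - yk))
        - c₃ / 2 * ((yk1 - yk) ⬝ᵥ (yk1 - yk)))
    (hcorr : (1 + αk * c₁) • (xk1 - xhat) = (αk * c₂) • (yk1 - yk)) :
    (F xk1 - F xs - gradF xs ⬝ᵥ (xk1 - xs)) + μ / 2 * ((yk1 - xs) ⬝ᵥ (yk1 - xs))
      ≤ (1 + αk * c₁)⁻¹ *
        ((F xk - F xs - gradF xs ⬝ᵥ (xk - xs)) + μ / 2 * ((yk - xs) ⬝ᵥ (yk - xs))) := by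
  have hs : (0:ℝ) < 1 + αk * c₁ := by positivity
  set t : ℝ := (1 + αk * c₁)⁻¹ * (αk * c₂) with ht_def
  have ht : (1 + αk * c₁) * t = αk * c₂ := by
    rw [ht_def, ← mul_assoc, mul_inv_cancel₀ hs.ne', one_mul]
  have hcorr' : xk1 - xhat = t • (yk1 - yk) := by
    rw [ht_def, mul_smul, ← hcorr, smul_smul, inv_mul_cancel₀ hs.ne', one_smul]
  have h1 : gradF xhat ⬝ᵥ (xk1 - xhat) = t * (gradF xhat ⬝ᵥ (yk1 - yk)) := by
    rw [hcorr', dotProduct_smul, smul_eq_mul]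
  have h2 : gradF xs ⬝ᵥ (xk1 - xhat) = t * (gradF xs ⬝ᵥ (yk1 - yk)) := by
    rw [hcorr', dotProduct_smul, smul_eq_mul]
  have h3 : (xk1 - xhat) ⬝ᵥ (xk1 - xhat) = t^2 * ((yk1 - yk) ⬝ᵥ (yk1 - yk)) := by
    rw [hcorr', dotProduct_smul, smul_dotProduct, smul_eq_mul, smul_eq_mul]
    ring
  have h4 : gradF xs ⬝ᵥ (xk1 - xs)
      = gradF xs ⬝ᵥ (xhat - xs) + t * (gradF xs ⬝ᵥ (yk1 - yk)) := by
    rw [← h2, ← dotProduct_add]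
    congr 1
    abel
  have h5 : (gradF xhat - gradF xs) ⬝ᵥ (yk1 - yk)
      = gradF xhat ⬝ᵥ (yk1 - yk) - gradF xs ⬝ᵥ (yk1 - yk) :=
    sub_dotProduct _ _ _
  have hq : (0:ℝ) ≤ (yk1 - yk) ⬝ᵥ (yk1 - yk) := by
    unfold dotProduct
    exact Finset.sum_nonneg fun i _ => mul_self_nonneg _
  have hup := hupper xk1 xhat
  rw [h1, h3] at hup
  rw [h5] at hdecay
  have hkey : LF * ((1 + αk * c₁) * t^2) ≤ c₃ := by
    have hsq : ((1 + αk * c₁) * t)^2 = (αk * c₂)^2 := by rw [ht]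
    have hmul : LF * ((1 + αk * c₁) * t^2) * (1 + αk * c₁) = αk ^ 2 * LF * c₂ ^ 2 := by
      nlinarith [hsq]
    rw [← mul_le_mul_iff_of_pos_right hs, hmul]
    linarith [hstep]
  have hkeyq := mul_le_mul_of_nonneg_right hkey hq
  have hupS := mul_le_mul_of_nonneg_left hup hs.le
  have hA : (1 + αk * c₁) * (t * (gradF xhat ⬝ᵥ (yk1 - yk)))
      = αk * c₂ * (gradF xhat ⬝ᵥ (yk1 - yk)) := by rw [← mul_assoc, ht]
  have hB : (1 + αk * c₁) * (t * (gradF xs ⬝ᵥ (yk1 - yk)))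
      = αk * c₂ * (gradF xs ⬝ᵥ (yk1 - yk)) := by rw [← mul_assoc, ht]
  rw [h4, inv_mul_eq_div, le_div_iff₀ hs]
  nlinarith [hdecay, hupS, hA, hB, hkeyq]
end

section
/- Let F : ℝ^n → ℝ be differentiable with F ∈ S_{μ, L_F}, μ > 0, let N be a real n×n skew-symmetric matrix, and let x* satisfy ∇F(x*) + N x* = 0. Suppose the sequences (x_k), (y_k), (x̂_k) satisfy the IMEX scheme (x̂_{k+1} − x_k)/α_k = y_k − x̂_{k+1}, (y_{k+1} − y_k)/α_k = x̂_{k+1} − y_{k+1} − (1/μ)(∇F(x̂_{k+1}) + N y_{k+1}), (x_{k+1} − x_k)/α_k = y_{k+1} − x_{k+1}, with step sizes α_k > 0 satisfying α_k² L_F ≤ (1 + α_k) μ. Then E_{k+1} ≤ (1 + α_k)^{−1} E_k for every k, where E_k = D_F(x_k, x*) + (μ/2)‖y_k − x*‖². In particular, for the fixed step size α_k = √(μ/L_F), one has E_k ≤ (1 + √(μ/L_F))^{−k} E_0 and ‖x_k − x*‖² + ‖y_k − x*‖² ≤ (1 + √(μ/L_F))^{−k} · 2E_0/μ. -/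
open Matrix

private lemma dp_self_nonneg {m : ℕ} (v : Fin m → ℝ) : 0 ≤ v ⬝ᵥ v :=
  Finset.sum_nonneg fun _ _ => mul_self_nonneg _

private lemma skew_dp {m : ℕ} (N : Matrix (Fin m) (Fin m) ℝ) (h : Nᵀ = -N)
    (v : Fin m → ℝ) : N.mulVec v ⬝ᵥ v = 0 := by
  have h1 : N.mulVec v ⬝ᵥ v = v ⬝ᵥ N.mulVec v := dotProduct_comm _ _
  rw [Matrix.dotProduct_mulVec, ← Matrix.mulVec_transpose, h, Matrix.neg_mulVec,
    neg_dotProduct] at h1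
  linarith

private lemma sq_sub {m : ℕ} (p q : Fin m → ℝ) :
    (p - q) ⬝ᵥ (p - q) = p ⬝ᵥ p - 2 * (p ⬝ᵥ q) + q ⬝ᵥ q := by
  simp only [sub_dotProduct, dotProduct_sub]
  linear_combination dotProduct_comm p q

private lemma sq_add {m : ℕ} (p q : Fin m → ℝ) :
    (p + q) ⬝ᵥ (p + q) = p ⬝ᵥ p + 2 * (p ⬝ᵥ q) + q ⬝ᵥ q := by
  simp only [add_dotProduct, dotProduct_add]
  linear_combination dotProduct_comm q p

set_option maxHeartbeats 1000000 in
private lemma imex_onestep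
    {n : ℕ} (μ LF : ℝ) (hμ : 0 < μ)
    (F : (Fin n → ℝ) → ℝ) (gradF : (Fin n → ℝ) → (Fin n → ℝ))
    (hlower : ∀ x y : Fin n → ℝ,
      μ / 2 * ((x - y) ⬝ᵥ (x - y)) ≤ F x - F y - gradF y ⬝ᵥ (x - y))
    (hupper : ∀ x y : Fin n → ℝ,
      F x - F y - gradF y ⬝ᵥ (x - y) ≤ LF / 2 * ((x - y) ⬝ᵥ (x - y)))
    (N : Matrix (Fin n) (Fin n) ℝ) (hskew : Nᵀ = -N)
    (xs : Fin n → ℝ) (hxs : gradF xs + N.mulVec xs = 0)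
    (a : ℝ) (ha : 0 < a) (hastep : a ^ 2 * LF ≤ (1 + a) * μ)
    (X X' Y Y' H : Fin n → ℝ)
    (e1 : H - X = a • (Y - H))
    (e2 : Y' - Y = a • (H - Y' - (1 / μ) • (gradF H + N.mulVec Y')))
    (e3 : X' - X = a • (Y' - X')) :
    (F X' - F xs - gradF xs ⬝ᵥ (X' - xs)) + μ / 2 * ((Y' - xs) ⬝ᵥ (Y' - xs))
      ≤ (1 + a)⁻¹ *
        ((F X - F xs - gradF xs ⬝ᵥ (X - xs)) + μ / 2 * ((Y - xs) ⬝ᵥ (Y - xs))) := by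
  have h1a : (0:ℝ) < 1 + a := by linarith
  -- vector identity: (1+a) • (X' - H) = a • (Y' - Y)
  have hcomb : (1 + a) • (X' - H) = a • (Y' - Y) := by
    linear_combination (norm := module) e3 - e1
  -- squares
  have hq34 : (1 + a) ^ 2 * ((X' - H) ⬝ᵥ (X' - H)) = a ^ 2 * ((Y' - Y) ⬝ᵥ (Y' - Y)) := by
    have h := congrArg (fun w => w ⬝ᵥ w) hcomb
    simp only [smul_dotProduct, dotProduct_smul, smul_eq_mul] at h
    ring_nf
    ring_nf at h
    linarith
  -- convexity / smoothness
  have hA := hlower X H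
  have hB := hlower xs H
  have hC := hupper X' H
  have hq2eq : (xs - H) ⬝ᵥ (xs - H) = (H - xs) ⬝ᵥ (H - xs) := by
    rw [show xs - H = -(H - xs) by abel, neg_dotProduct, dotProduct_neg, neg_neg]
  rw [hq2eq] at hB
  -- dot-product rearrangement identities
  have gid1 : gradF H ⬝ᵥ (X' - X) = gradF H ⬝ᵥ (X' - H) - gradF H ⬝ᵥ (X - H) := by
    rw [show X' - X = (X' - H) - (X - H) by abel, dotProduct_sub]
  have gid2 : gradF xs ⬝ᵥ (X' - X) = gradF xs ⬝ᵥ (X' - xs) - gradF xs ⬝ᵥ (X - xs) := by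
    rw [show X' - X = (X' - xs) - (X - xs) by abel, dotProduct_sub]
  have gid3 : gradF H ⬝ᵥ (X' - xs) = gradF H ⬝ᵥ (X' - H) - gradF H ⬝ᵥ (xs - H) := by
    rw [show X' - xs = (X' - H) - (xs - H) by abel, dotProduct_sub]
  have idH : gradF H ⬝ᵥ (Y' - X') = gradF H ⬝ᵥ (Y' - xs) - gradF H ⬝ᵥ (X' - xs) := by
    rw [show Y' - X' = (Y' - xs) - (X' - xs) by abel, dotProduct_sub]
  have idS : gradF xs ⬝ᵥ (Y' - X') = gradF xs ⬝ᵥ (Y' - xs) - gradF xs ⬝ᵥ (X' - xs) := by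
    rw [show Y' - X' = (Y' - xs) - (X' - xs) by abel, dotProduct_sub]
  have hg3 : gradF H ⬝ᵥ (X' - X) = a * (gradF H ⬝ᵥ (Y' - X')) := by
    rw [e3, dotProduct_smul, smul_eq_mul]
  have hg3s : gradF xs ⬝ᵥ (X' - X) = a * (gradF xs ⬝ᵥ (Y' - X')) := by
    rw [e3, dotProduct_smul, smul_eq_mul]
  -- expansion of the quadratic difference
  have hIII : (Y' - xs) ⬝ᵥ (Y' - xs) - (Y - xs) ⬝ᵥ (Y - xs)
      = 2 * ((Y' - Y) ⬝ᵥ (Y' - xs)) - (Y' - Y) ⬝ᵥ (Y' - Y) := by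
    rw [show Y - xs = (Y' - xs) - (Y' - Y) by abel, sq_sub (Y' - xs) (Y' - Y)]
    linear_combination 2 * dotProduct_comm (Y' - xs) (Y' - Y)
  -- three point identity
  have hVI : (H - Y') ⬝ᵥ (Y' - xs)
      = ((H - xs) ⬝ᵥ (H - xs) - (H - Y') ⬝ᵥ (H - Y') - (Y' - xs) ⬝ᵥ (Y' - xs)) / 2 := by
    rw [show H - xs = (H - Y') + (Y' - xs) by abel, sq_add (H - Y') (Y' - xs)]
    ring
  -- scheme identity for y, dotted with Y' - xs
  have hNs : N.mulVec xs = -gradF xs := by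
    rw [eq_neg_iff_add_eq_zero, add_comm]; exact hxs
  have hNdec : gradF H + N.mulVec Y' = (gradF H - gradF xs) + N.mulVec (Y' - xs) := by
    rw [Matrix.mulVec_sub, hNs]; abel
  rw [hNdec] at e2
  have skew0 : N.mulVec (Y' - xs) ⬝ᵥ (Y' - xs) = 0 := skew_dp N hskew _
  have hμne : μ ≠ 0 := ne_of_gt hμ
  have hdot2 : μ * ((Y' - Y) ⬝ᵥ (Y' - xs))
      = a * μ * ((H - Y') ⬝ᵥ (Y' - xs))
        - a * (gradF H ⬝ᵥ (Y' - xs)) + a * (gradF xs ⬝ᵥ (Y' - xs)) := by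
    rw [e2]
    simp only [smul_dotProduct, sub_dotProduct, add_dotProduct,
      smul_eq_mul, skew0]
    field_simp
    ring
  -- one step inequalities
  have hI : (F X' - F xs - gradF xs ⬝ᵥ (X' - xs)) - (F X - F xs - gradF xs ⬝ᵥ (X - xs))
      ≤ (gradF H ⬝ᵥ (X' - X) - gradF xs ⬝ᵥ (X' - X))
        + LF / 2 * ((X' - H) ⬝ᵥ (X' - H)) - μ / 2 * ((X - H) ⬝ᵥ (X - H)) := by
    linarith [hA, hC, gid1, gid2]
  have hII : F X' - F xs - gradF xs ⬝ᵥ (X' - xs)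
      ≤ (gradF H ⬝ᵥ (X' - xs) - gradF xs ⬝ᵥ (X' - xs))
        + LF / 2 * ((X' - H) ⬝ᵥ (X' - H)) - μ / 2 * ((H - xs) ⬝ᵥ (H - xs)) := by
    linarith [hB, hC, gid3]
  have haII : a * (F X' - F xs - gradF xs ⬝ᵥ (X' - xs))
      ≤ a * ((gradF H ⬝ᵥ (X' - xs) - gradF xs ⬝ᵥ (X' - xs))
        + LF / 2 * ((X' - H) ⬝ᵥ (X' - H)) - μ / 2 * ((H - xs) ⬝ᵥ (H - xs))) :=
    mul_le_mul_of_nonneg_left hII ha.le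
  have hIIIμ : μ / 2 * ((Y' - xs) ⬝ᵥ (Y' - xs)) - μ / 2 * ((Y - xs) ⬝ᵥ (Y - xs))
      = μ * ((Y' - Y) ⬝ᵥ (Y' - xs)) - μ / 2 * ((Y' - Y) ⬝ᵥ (Y' - Y)) := by
    linear_combination (μ / 2) * hIII
  have hVIμ : a * μ * ((H - Y') ⬝ᵥ (Y' - xs))
      = a * μ / 2 * ((H - xs) ⬝ᵥ (H - xs)) - a * μ / 2 * ((H - Y') ⬝ᵥ (H - Y'))
        - a * μ / 2 * ((Y' - xs) ⬝ᵥ (Y' - xs)) := by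
    linear_combination (a * μ) * hVI
  have hcancel : (gradF H ⬝ᵥ (X' - X) - gradF xs ⬝ᵥ (X' - X))
      + a * (gradF H ⬝ᵥ (X' - xs) - gradF xs ⬝ᵥ (X' - xs))
      - a * (gradF H ⬝ᵥ (Y' - xs) - gradF xs ⬝ᵥ (Y' - xs)) = 0 := by
    linear_combination hg3 - hg3s + a * idH - a * idS
  -- step size condition
  have hq3nn := dp_self_nonneg (X' - H)
  have hq4nn := dp_self_nonneg (Y' - Y)
  have hq1nn := dp_self_nonneg (X - H)
  have hq5nn := dp_self_nonneg (H - Y')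
  -- replace all scalar quantities by opaque variables
  set sq1 := (X - H) ⬝ᵥ (X - H) with hsq1
  set sq2 := (H - xs) ⬝ᵥ (H - xs) with hsq2
  set sq3 := (X' - H) ⬝ᵥ (X' - H) with hsq3
  set sq4 := (Y' - Y) ⬝ᵥ (Y' - Y) with hsq4
  set sq5 := (H - Y') ⬝ᵥ (H - Y') with hsq5
  set sqv := (Y - xs) ⬝ᵥ (Y - xs) with hsqv
  set sqv' := (Y' - xs) ⬝ᵥ (Y' - xs) with hsqv'
  set sm1 := (Y' - Y) ⬝ᵥ (Y' - xs) with hsm1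
  set sm2 := (H - Y') ⬝ᵥ (Y' - xs) with hsm2
  set sp4 := gradF xs ⬝ᵥ (X - xs) with hsp4
  set sp5 := gradF xs ⬝ᵥ (X' - xs) with hsp5
  set sp6 := gradF H ⬝ᵥ (X' - xs) with hsp6
  set sp7 := gradF xs ⬝ᵥ (Y' - xs) with hsp7
  set sp8 := gradF H ⬝ᵥ (Y' - xs) with hsp8
  set sgX := gradF H ⬝ᵥ (X' - X) with hsgX
  set sgXs := gradF xs ⬝ᵥ (X' - X) with hsgXs
  set sFX := F X with hsFX
  set sFX' := F X' with hsFX'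
  set sFs := F xs with hsFs
  clear_value sq1 sq2 sq3 sq4 sq5 sqv sqv' sm1 sm2 sp4 sp5 sp6 sp7 sp8 sgX sgXs sFX sFX' sFs
  have hVII : (1 + a) * (LF * sq3) ≤ μ * sq4 := by
    have hkey : LF * ((1 + a) ^ 2 * sq3) = LF * (a ^ 2 * sq4) := by rw [hq34]
    have hp := mul_le_mul_of_nonneg_right hastep hq4nn
    have h' : (1 + a) * ((1 + a) * (LF * sq3)) ≤ (1 + a) * (μ * sq4) := by
      linarith only [hkey, hp]
    exact le_of_mul_le_mul_left h' h1a
  have nn1 : 0 ≤ μ * sq1 := mul_nonneg hμ.le hq1nn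
  have nn2 : 0 ≤ a * (μ * sq5) := mul_nonneg ha.le (mul_nonneg hμ.le hq5nn)
  have target : ((sFX' - sFs - sp5) + μ / 2 * sqv') * (1 + a)
      ≤ (sFX - sFs - sp4) + μ / 2 * sqv := by
    linarith only [hI, haII, hIIIμ, hdot2, hVIμ, hcancel, hVII, nn1, nn2]
  rw [inv_mul_eq_div, le_div_iff₀ h1a]
  exact target

set_option maxHeartbeats 1000000 in
/-- **Accelerated linear convergence of the IMEX scheme.**
For `F ∈ S_{μ,L_F}` (`μ > 0`), `N` skew-symmetric, `∇F(x*) + Nx* = 0`, and the IMEX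
iteration with steps `α_k > 0` satisfying `α_k² L_F ≤ (1+α_k)μ`, the Lyapunov
function `E_k = D_F(x_k,x*) + (μ/2)‖y_k - x*‖²` satisfies `E_{k+1} ≤ (1+α_k)⁻¹E_k`;
in particular for `α_k = √(μ/L_F)` one gets `E_k ≤ (1+√(μ/L_F))⁻ᵏ E_0` and
`‖x_k - x*‖² + ‖y_k - x*‖² ≤ (1+√(μ/L_F))⁻ᵏ · 2E_0/μ`. -/
theorem imex_linear_convergence
    {n : ℕ} (μ LF : ℝ) (hμ : 0 < μ)
    (F : (Fin n → ℝ) → ℝ) (gradF : (Fin n → ℝ) → (Fin n → ℝ))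
    (hdiff : ∀ x, HasFDerivAt F (dpCLM (gradF x)) x)
    (hlower : ∀ x y : Fin n → ℝ,
      μ / 2 * ((x - y) ⬝ᵥ (x - y)) ≤ F x - F y - gradF y ⬝ᵥ (x - y))
    (hupper : ∀ x y : Fin n → ℝ,
      F x - F y - gradF y ⬝ᵥ (x - y) ≤ LF / 2 * ((x - y) ⬝ᵥ (x - y)))
    (N : Matrix (Fin n) (Fin n) ℝ) (hskew : Nᵀ = -N)
    (xs : Fin n → ℝ) (hxs : gradF xs + N.mulVec xs = 0)
    (α : ℕ → ℝ) (hα : ∀ k, 0 < α k) (hαstep : ∀ k, (α k) ^ 2 * LF ≤ (1 + α k) * μ)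
    (x y xhat : ℕ → (Fin n → ℝ))
    (hstep1 : ∀ k, xhat (k + 1) - x k = α k • (y k - xhat (k + 1)))
    (hstep2 : ∀ k, y (k + 1) - y k =
      α k • (xhat (k + 1) - y (k + 1)
        - (1 / μ) • (gradF (xhat (k + 1)) + N.mulVec (y (k + 1)))))
    (hstep3 : ∀ k, x (k + 1) - x k = α k • (y (k + 1) - x (k + 1))) :
    (∀ k,
      (F (x (k + 1)) - F xs - gradF xs ⬝ᵥ (x (k + 1) - xs))
          + μ / 2 * ((y (k + 1) - xs) ⬝ᵥ (y (k + 1) - xs))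
        ≤ (1 + α k)⁻¹ *
          ((F (x k) - F xs - gradF xs ⬝ᵥ (x k - xs))
            + μ / 2 * ((y k - xs) ⬝ᵥ (y k - xs)))) ∧
    ((∀ k, α k = Real.sqrt (μ / LF)) → ∀ k,
      ((F (x k) - F xs - gradF xs ⬝ᵥ (x k - xs))
          + μ / 2 * ((y k - xs) ⬝ᵥ (y k - xs))
        ≤ ((1 + Real.sqrt (μ / LF))⁻¹) ^ k *
          ((F (x 0) - F xs - gradF xs ⬝ᵥ (x 0 - xs))
            + μ / 2 * ((y 0 - xs) ⬝ᵥ (y 0 - xs)))) ∧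
      ((x k - xs) ⬝ᵥ (x k - xs) + (y k - xs) ⬝ᵥ (y k - xs)
        ≤ ((1 + Real.sqrt (μ / LF))⁻¹) ^ k *
          (2 * ((F (x 0) - F xs - gradF xs ⬝ᵥ (x 0 - xs))
            + μ / 2 * ((y 0 - xs) ⬝ᵥ (y 0 - xs))) / μ))) := by
  have key : ∀ k,
      (F (x (k + 1)) - F xs - gradF xs ⬝ᵥ (x (k + 1) - xs))
          + μ / 2 * ((y (k + 1) - xs) ⬝ᵥ (y (k + 1) - xs))
        ≤ (1 + α k)⁻¹ *
          ((F (x k) - F xs - gradF xs ⬝ᵥ (x k - xs))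
            + μ / 2 * ((y k - xs) ⬝ᵥ (y k - xs))) := fun k =>
    imex_onestep μ LF hμ F gradF hlower hupper N hskew xs hxs (α k) (hα k) (hαstep k)
      (x k) (x (k + 1)) (y k) (y (k + 1)) (xhat (k + 1))
      (hstep1 k) (hstep2 k) (hstep3 k)
  refine ⟨key, fun hfix k => ?_⟩
  set r := (1 + Real.sqrt (μ / LF))⁻¹ with hr
  have hs0 : 0 < Real.sqrt (μ / LF) := (hfix 0) ▸ hα 0
  have hrpos : 0 < r := inv_pos.2 (by linarith)
  have Ebound : ∀ k,
      (F (x k) - F xs - gradF xs ⬝ᵥ (x k - xs)) + μ / 2 * ((y k - xs) ⬝ᵥ (y k - xs))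
        ≤ r ^ k * ((F (x 0) - F xs - gradF xs ⬝ᵥ (x 0 - xs))
            + μ / 2 * ((y 0 - xs) ⬝ᵥ (y 0 - xs))) := by
    intro k
    induction k with
    | zero => simp
    | succ k ih =>
      have h1 := key k
      rw [hfix k] at h1
      calc (F (x (k+1)) - F xs - gradF xs ⬝ᵥ (x (k+1) - xs))
            + μ / 2 * ((y (k+1) - xs) ⬝ᵥ (y (k+1) - xs))
          ≤ r * ((F (x k) - F xs - gradF xs ⬝ᵥ (x k - xs))
              + μ / 2 * ((y k - xs) ⬝ᵥ (y k - xs))) := h1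
        _ ≤ r * (r ^ k * ((F (x 0) - F xs - gradF xs ⬝ᵥ (x 0 - xs))
              + μ / 2 * ((y 0 - xs) ⬝ᵥ (y 0 - xs)))) :=
            mul_le_mul_of_nonneg_left ih hrpos.le
        _ = r ^ (k+1) * ((F (x 0) - F xs - gradF xs ⬝ᵥ (x 0 - xs))
              + μ / 2 * ((y 0 - xs) ⬝ᵥ (y 0 - xs))) := by ring
  refine ⟨Ebound k, ?_⟩
  have hx2 := hlower (x k) xs
  have hE := Ebound k
  have hqx := dp_self_nonneg (x k - xs)
  have hqy := dp_self_nonneg (y k - xs)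
  set qx := (x k - xs) ⬝ᵥ (x k - xs) with hqxdef
  set qy := (y k - xs) ⬝ᵥ (y k - xs) with hqydef
  set qy0 := (y 0 - xs) ⬝ᵥ (y 0 - xs) with hqy0def
  set Dk := F (x k) - F xs - gradF xs ⬝ᵥ (x k - xs) with hDk
  set D0 := F (x 0) - F xs - gradF xs ⬝ᵥ (x 0 - xs) with hD0
  clear_value qx qy qy0 Dk D0
  have heq : r ^ k * (2 * (D0 + μ / 2 * qy0) / μ) = (r ^ k * (2 * (D0 + μ / 2 * qy0))) / μ := by
    ring
  rw [heq, le_div_iff₀ hμ]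
  have h2 : μ * qx ≤ 2 * Dk := by linarith only [hx2]
  have h3 : Dk + μ / 2 * qy ≤ r ^ k * (D0 + μ / 2 * qy0) := hE
  linarith only [h2, h3, hqy, hμ]
end

section
/- Let I_V be an m×m symmetric positive definite real matrix, I_Q an n×n symmetric positive definite real matrix, B ∈ ℝ^{n×m}, and μ_f, μ_g > 0. Let L_S > 0 be such that pᵀ B I_V^{−1} Bᵀ p ≤ L_S · pᵀ I_Q p for all p ∈ ℝ^n (e.g., L_S = λ_max(I_Q^{−1} B I_V^{−1} Bᵀ)). If 0 ≤ α ≤ √(μ_f μ_g/(4 L_S)), then the (m+n)×(m+n) block matrix [[μ_f I_V, −2α Bᵀ], [−2α B, μ_g I_Q]] is symmetric positive semidefinite. -/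
open Matrix

lemma key {m n : ℕ} (IV : Matrix (Fin m) (Fin m) ℝ) (hIV : IV.PosDef)
    (B : Matrix (Fin n) (Fin m) ℝ) (u : Fin m → ℝ) (v : Fin n → ℝ) (t : ℝ) (ht : t ≠ 0) :
    2 * (v ⬝ᵥ B *ᵥ u) ≤ t^2 * (u ⬝ᵥ IV *ᵥ u) + (t⁻¹)^2 * (v ⬝ᵥ (B * IV⁻¹ * Bᵀ) *ᵥ v) := by
  set w := IV⁻¹ *ᵥ (Bᵀ *ᵥ v) with hw
  have hdet : IsUnit IV.det := isUnit_iff_ne_zero.mpr hIV.det_pos.ne'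
  have hinv : IV *ᵥ w = Bᵀ *ᵥ v := by
    rw [hw, mulVec_mulVec, Matrix.mul_nonsing_inv _ hdet, one_mulVec]
  have hc1 : u ⬝ᵥ IV *ᵥ w = v ⬝ᵥ B *ᵥ u := by
    rw [hinv, dotProduct_comm, mulVec_transpose, ← dotProduct_mulVec]
  have hc2 : w ⬝ᵥ IV *ᵥ u = v ⬝ᵥ B *ᵥ u := by
    have hsym : IVᵀ = IV := hIV.1
    rw [dotProduct_mulVec, ← hsym, vecMul_transpose, hinv, mulVec_transpose,
      ← dotProduct_mulVec]
  have hc3 : w ⬝ᵥ IV *ᵥ w = v ⬝ᵥ (B * IV⁻¹ * Bᵀ) *ᵥ v := by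
    rw [hinv, ← mulVec_mulVec, ← mulVec_mulVec, dotProduct_mulVec v B,
      ← mulVec_transpose B v, ← hw, dotProduct_comm]
  have h0 := hIV.posSemidef.dotProduct_mulVec_nonneg (t • u - t⁻¹ • w)
  simp only [star_trivial, mulVec_sub, mulVec_smul, sub_dotProduct, dotProduct_sub,
    smul_dotProduct, dotProduct_smul, smul_eq_mul] at h0
  rw [hc1, hc2, hc3] at h0
  have ht2 : t * t⁻¹ = 1 := mul_inv_cancel₀ ht
  rw [show t * (t * (u ⬝ᵥ IV *ᵥ u) - t⁻¹ * (v ⬝ᵥ B *ᵥ u))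
      - t⁻¹ * (t * (v ⬝ᵥ B *ᵥ u) - t⁻¹ * (v ⬝ᵥ (B * IV⁻¹ * Bᵀ) *ᵥ v))
      = t^2 * (u ⬝ᵥ IV *ᵥ u) - (t * t⁻¹) * (2 * (v ⬝ᵥ B *ᵥ u))
        + (t⁻¹)^2 * (v ⬝ᵥ (B * IV⁻¹ * Bᵀ) *ᵥ v) by ring, ht2, one_mul] at h0
  linarith

/-- **Positive semidefiniteness of the block matrix `[[μ_f I_V, -2αBᵀ], [-2αB, μ_g I_Q]]`.**
If `I_V, I_Q` are SPD, `pᵀ(B I_V⁻¹ Bᵀ)p ≤ L_S pᵀI_Q p` for all `p` with `L_S > 0`,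
`μ_f, μ_g > 0`, and `0 ≤ α ≤ √(μ_f μ_g/(4L_S))`, then the block matrix is
symmetric positive semidefinite. -/
theorem block_matrix_posSemidef
    {m n : ℕ}
    (IV : Matrix (Fin m) (Fin m) ℝ) (IQ : Matrix (Fin n) (Fin n) ℝ)
    (hIV : IV.PosDef) (hIQ : IQ.PosDef)
    (B : Matrix (Fin n) (Fin m) ℝ)
    (μf μg LS α : ℝ) (hμf : 0 < μf) (hμg : 0 < μg) (hLS : 0 < LS)
    (hS : ∀ p : Fin n → ℝ,
      p ⬝ᵥ (B * IV⁻¹ * Bᵀ).mulVec p ≤ LS * (p ⬝ᵥ IQ.mulVec p))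
    (hα0 : 0 ≤ α) (hα1 : α ≤ Real.sqrt (μf * μg / (4 * LS))) :
    (Matrix.fromBlocks (μf • IV) (-((2 * α) • Bᵀ)) (-((2 * α) • B)) (μg • IQ)).PosSemidef := by
  rw [posSemidef_iff_dotProduct_mulVec]
  constructor
  · have hIVt : IVᵀ = IV := by
      rw [← conjTranspose_eq_transpose_of_trivial]; exact hIV.1
    have hIQt : IQᵀ = IQ := by
      rw [← conjTranspose_eq_transpose_of_trivial]; exact hIQ.1
    show _ᴴ = _
    rw [conjTranspose_eq_transpose_of_trivial, fromBlocks_transpose, transpose_neg,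
      transpose_neg, transpose_smul, transpose_smul, transpose_smul, transpose_smul,
      transpose_transpose, hIVt, hIQt]
  · intro x
    set u : Fin m → ℝ := x ∘ Sum.inl with hu
    set v : Fin n → ℝ := x ∘ Sum.inr with hv
    have hx : x = Sum.elim u v := by funext i; cases i <;> rfl
    rw [hx, fromBlocks_mulVec, star_trivial, sumElim_dotProduct_sumElim]
    simp only [dotProduct_add, neg_mulVec, dotProduct_neg, smul_mulVec,
      dotProduct_smul, smul_eq_mul, Sum.elim_comp_inl, Sum.elim_comp_inr]
    have hcross : u ⬝ᵥ Bᵀ *ᵥ v = v ⬝ᵥ B *ᵥ u := by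
      rw [dotProduct_comm, mulVec_transpose, ← dotProduct_mulVec]
    rw [hcross]
    set A := u ⬝ᵥ IV *ᵥ u with hA
    set Bq := v ⬝ᵥ IQ *ᵥ v with hBq
    set c := v ⬝ᵥ B *ᵥ u with hc
    have hA0 : 0 ≤ A := by simpa using hIV.posSemidef.dotProduct_mulVec_nonneg u
    have hBq0 : 0 ≤ Bq := by simpa using hIQ.posSemidef.dotProduct_mulVec_nonneg v
    have hα2 : α ^ 2 ≤ μf * μg / (4 * LS) := by
      have hnn : (0:ℝ) ≤ μf * μg / (4 * LS) := by positivity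
      nlinarith [Real.sq_sqrt hnn, Real.sqrt_nonneg (μf * μg / (4 * LS))]
    rcases eq_or_lt_of_le hα0 with h0 | hαpos
    · rw [← h0]; ring_nf; positivity
    · set t := Real.sqrt (μf / (2 * α)) with htdef
      have htpos : 0 < t := Real.sqrt_pos.mpr (by positivity)
      have ht2 : t ^ 2 = μf / (2 * α) := Real.sq_sqrt (by positivity)
      have hkey := key IV hIV B u v t htpos.ne'
      rw [← hA, ← hc] at hkey
      have e1 : 2 * α * t ^ 2 = μf := by rw [ht2]; field_simp
      have e2 : 2 * α * t⁻¹ ^ 2 = 4 * α ^ 2 / μf := by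
        rw [inv_pow, ht2]
        field_simp
        ring
      have h1 : 4 * α * c ≤ μf * A + (4 * α ^ 2 / μf) * (v ⬝ᵥ (B * IV⁻¹ * Bᵀ) *ᵥ v) := by
        have h := mul_le_mul_of_nonneg_left hkey (by positivity : (0:ℝ) ≤ 2 * α)
        calc 4 * α * c = 2 * α * (2 * c) := by ring
          _ ≤ 2 * α * (t ^ 2 * A + t⁻¹ ^ 2 * (v ⬝ᵥ (B * IV⁻¹ * Bᵀ) *ᵥ v)) := h
          _ = (2 * α * t ^ 2) * A + (2 * α * t⁻¹ ^ 2) * (v ⬝ᵥ (B * IV⁻¹ * Bᵀ) *ᵥ v) := by ring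
          _ = μf * A + (4 * α ^ 2 / μf) * (v ⬝ᵥ (B * IV⁻¹ * Bᵀ) *ᵥ v) := by rw [e1, e2]
      have h2 : (4 * α ^ 2 / μf) * (v ⬝ᵥ (B * IV⁻¹ * Bᵀ) *ᵥ v) ≤ (4 * α ^ 2 / μf) * (LS * Bq) :=
        mul_le_mul_of_nonneg_left (hS v) (by positivity)
      have h3 : (4 * α ^ 2 / μf) * LS ≤ μg := by
        rw [div_mul_eq_mul_div, div_le_iff₀ hμf]
        nlinarith [(le_div_iff₀ (by positivity : (0:ℝ) < 4 * LS)).mp hα2]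
      have h4 : (4 * α ^ 2 / μf) * (LS * Bq) ≤ μg * Bq := by
        have := mul_le_mul_of_nonneg_right h3 hBq0
        nlinarith [this]
      linarith
end

section
/- Let I_V be an m×m symmetric positive definite real matrix, I_Q an n×n symmetric positive definite real matrix, B ∈ ℝ^{n×m} of full rank n with m ≥ n, and μ_f, μ_g > 0. Set I_μ = diag(μ_f I_V, μ_g I_Q) and B^sym = [[0, Bᵀ], [B, 0]] ∈ ℝ^{(m+n)×(m+n)}, and let L_S = λ_max(I_Q^{−1} B I_V^{−1} Bᵀ). Then the largest absolute value among the generalized eigenvalues λ of the pencil B^sym x = λ I_μ x equals √(L_S/(μ_f μ_g)); i.e., the I_μ-operator norm of B^sym is √(L_S/(μ_f μ_g)). -/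
open Matrix

private lemma smul_elim' {m n : Type*} (c : ℝ) (a : m → ℝ) (b : n → ℝ) :
    c • Sum.elim a b = Sum.elim (c • a) (c • b) := by
  funext i; cases i <;> rfl

private lemma elim_eq_iff' {m n : Type*} {a c : m → ℝ} {b d : n → ℝ} :
    Sum.elim a b = Sum.elim c d ↔ a = c ∧ b = d := by
  constructor
  · intro h
    exact ⟨funext fun i => congrFun h (Sum.inl i), funext fun i => congrFun h (Sum.inr i)⟩
  · rintro ⟨rfl, rfl⟩; rfl

/-- **The `I_μ`-operator norm of the block skew-coupling matrix `Bˢʸᵐ`.**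
With `I_μ = diag(μ_f I_V, μ_g I_Q)` and `Bˢʸᵐ = [[0, Bᵀ], [B, 0]]`, and `L_S` the
largest generalized eigenvalue of the pencil `(B I_V⁻¹ Bᵀ, I_Q)` (i.e.
`λ_max(I_Q⁻¹ B I_V⁻¹ Bᵀ)`), the largest absolute value of a generalized eigenvalue
of the pencil `(Bˢʸᵐ, I_μ)` equals `√(L_S/(μ_f μ_g))`. -/
theorem block_skew_generalized_eigenvalue_norm
    {m n : ℕ} (hmn : n ≤ m)
    (IV : Matrix (Fin m) (Fin m) ℝ) (IQ : Matrix (Fin n) (Fin n) ℝ)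
    (hIV : IV.PosDef) (hIQ : IQ.PosDef)
    (B : Matrix (Fin n) (Fin m) ℝ) (hrank : B.rank = n)
    (μf μg LS : ℝ) (hμf : 0 < μf) (hμg : 0 < μg)
    (hLS : IsGreatest
      {r : ℝ | ∃ p : Fin n → ℝ, p ≠ 0 ∧
        (B * IV⁻¹ * Bᵀ).mulVec p = r • IQ.mulVec p} LS) :
    IsGreatest
      {r : ℝ | ∃ (lam : ℝ) (x : Fin m ⊕ Fin n → ℝ), x ≠ 0 ∧
        (Matrix.fromBlocks 0 Bᵀ B 0).mulVec x
          = lam • (Matrix.fromBlocks (μf • IV) 0 0 (μg • IQ)).mulVec x ∧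
        r = |lam|}
      (Real.sqrt (LS / (μf * μg))) := by
  have hIVdet : IsUnit IV.det := hIV.det_pos.ne'.isUnit
  have hIVinv : IV⁻¹.PosDef := hIV.inv
  have hrows : LinearIndependent ℝ (fun i => B i) := by
    rw [linearIndependent_iff_card_eq_finrank_span]
    rw [Set.finrank]
    change _ = Module.finrank ℝ (Submodule.span ℝ (Set.range B.row))
    rw [← Matrix.rank_eq_finrank_span_row, hrank, Fintype.card_fin]
  have hinj : Function.Injective Bᵀ.mulVec := by
    rw [Matrix.mulVec_injective_iff]
    exact hrows
  have hBT : ∀ p : Fin n → ℝ, p ≠ 0 → Bᵀ *ᵥ p ≠ 0 := by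
    intro p hp h0
    exact hp (hinj (by rw [h0, Matrix.mulVec_zero]))
  have hIVu : ∀ u : Fin m → ℝ, IV *ᵥ u = 0 → u = 0 := by
    intro u hu
    have : IV⁻¹ *ᵥ (IV *ᵥ u) = 0 := by rw [hu, Matrix.mulVec_zero]
    rwa [Matrix.mulVec_mulVec, Matrix.nonsing_inv_mul IV hIVdet, Matrix.one_mulVec] at this
  obtain ⟨p, hp0, hpEq⟩ := hLS.1
  have hquad : 0 < (Bᵀ *ᵥ p) ⬝ᵥ (IV⁻¹ *ᵥ (Bᵀ *ᵥ p)) := by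
    have := hIVinv.dotProduct_mulVec_pos (hBT p hp0)
    rwa [star_trivial] at this
  have hquadQ : 0 < p ⬝ᵥ (IQ *ᵥ p) := by
    have := hIQ.dotProduct_mulVec_pos hp0
    rwa [star_trivial] at this
  have hkey : p ⬝ᵥ ((B * IV⁻¹ * Bᵀ) *ᵥ p) = LS * (p ⬝ᵥ (IQ *ᵥ p)) := by
    rw [hpEq, dotProduct_smul, smul_eq_mul]
  have hkey2 : p ⬝ᵥ ((B * IV⁻¹ * Bᵀ) *ᵥ p) = (Bᵀ *ᵥ p) ⬝ᵥ (IV⁻¹ *ᵥ (Bᵀ *ᵥ p)) := by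
    rw [← Matrix.mulVec_mulVec, ← Matrix.mulVec_mulVec, Matrix.dotProduct_mulVec,
      ← Matrix.mulVec_transpose]
  have hLSpos : 0 < LS := by nlinarith [hkey, hkey2, hquad, hquadQ]
  set s := Real.sqrt (LS / (μf * μg)) with hs
  have hdivpos : 0 < LS / (μf * μg) := div_pos hLSpos (mul_pos hμf hμg)
  have hspos : 0 < s := Real.sqrt_pos.mpr hdivpos
  have hs2 : s ^ 2 = LS / (μf * μg) := Real.sq_sqrt hdivpos.le
  have hLSeq : LS = s ^ 2 * (μf * μg) := by
    field_simp at hs2; linarith [hs2]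
  constructor
  · -- membership
    set u : Fin m → ℝ := (1 / (s * μf)) • (IV⁻¹ *ᵥ (Bᵀ *ᵥ p)) with hudef
    have hA : Bᵀ *ᵥ p = s • (μf • (IV *ᵥ u)) := by
      rw [hudef, Matrix.mulVec_smul, Matrix.mulVec_mulVec, Matrix.mulVec_mulVec,
        Matrix.mul_nonsing_inv IV hIVdet, Matrix.one_mul]
      rw [smul_smul, smul_smul, show s * μf * (1 / (s * μf)) = 1 by field_simp, one_smul]
    have hB : B *ᵥ u = s • (μg • (IQ *ᵥ p)) := by
      rw [hudef, Matrix.mulVec_smul, Matrix.mulVec_mulVec, Matrix.mulVec_mulVec, hpEq]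
      rw [smul_smul, smul_smul]
      congr 1
      rw [hLSeq]
      field_simp
    refine ⟨s, Sum.elim u p, ?_, ?_, (abs_of_pos hspos).symm⟩
    · intro h0
      exact hp0 (funext fun i => congrFun h0 (Sum.inr i))
    · rw [Matrix.fromBlocks_mulVec, Matrix.fromBlocks_mulVec]
      simp only [Sum.elim_comp_inl, Sum.elim_comp_inr, Matrix.zero_mulVec, add_zero,
        zero_add, Matrix.smul_mulVec]
      rw [smul_elim', elim_eq_iff']
      exact ⟨hA, hB⟩
  · -- upper bound
    rintro r ⟨lam, x, hx0, hEq, rfl⟩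
    set u := x ∘ Sum.inl with hu
    set v := x ∘ Sum.inr with hv
    have hx : x = Sum.elim u v := (Sum.elim_comp_inl_inr x).symm
    rw [hx] at hEq hx0
    rw [Matrix.fromBlocks_mulVec, Matrix.fromBlocks_mulVec] at hEq
    simp only [Sum.elim_comp_inl, Sum.elim_comp_inr, Matrix.zero_mulVec, add_zero,
      zero_add, Matrix.smul_mulVec] at hEq
    rw [smul_elim', elim_eq_iff'] at hEq
    obtain ⟨h1, h2⟩ := hEq
    rcases eq_or_ne lam 0 with rfl | hlam
    · rw [abs_zero]; exact hspos.le
    have hv0 : v ≠ 0 := by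
      intro hv0
      apply hx0
      rw [hv0, Matrix.mulVec_zero] at h1
      have h1' := h1.symm
      rw [smul_smul] at h1'
      have hIVu0 : IV *ᵥ u = 0 := by
        rcases smul_eq_zero.mp h1' with h' | h'
        · exact absurd h' (mul_ne_zero hlam hμf.ne')
        · exact h'
      rw [hIVu u hIVu0, hv0]
      funext i; cases i <;> simp
    have h1' : IV⁻¹ *ᵥ (Bᵀ *ᵥ v) = (lam * μf) • u := by
      rw [h1, Matrix.mulVec_smul, Matrix.mulVec_smul, Matrix.mulVec_mulVec,
        Matrix.nonsing_inv_mul IV hIVdet, Matrix.one_mulVec, smul_smul]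
    have h3 : (B * IV⁻¹ * Bᵀ) *ᵥ v = (lam ^ 2 * (μf * μg)) • (IQ *ᵥ v) := by
      rw [← Matrix.mulVec_mulVec, ← Matrix.mulVec_mulVec, h1', Matrix.mulVec_smul, h2,
        smul_smul, smul_smul]
      ring_nf
    have hmem : lam ^ 2 * (μf * μg) ≤ LS := hLS.2 ⟨v, hv0, h3⟩
    have hle : lam ^ 2 ≤ LS / (μf * μg) := (le_div_iff₀ (mul_pos hμf hμg)).mpr hmem
    calc |lam| = Real.sqrt (lam ^ 2) := (Real.sqrt_sq_eq_abs lam).symm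
      _ ≤ s := Real.sqrt_le_sqrt hle
end
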